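/- Let Z, G, F ∈ ℝⁿ with ‖Z‖² ≥ σ² − ε/6 and ⟨Z, G⟩ ≥ −ε/6 (Euclidean norm and inner product). If ‖G + Z − F‖² ≤ σ² − ε, then ⟨F, Z⟩ ≥ ε/4. -/

import Mathlib

open EuclideanSpace

/-- If `‖Z‖² ≥ σ² - ε/6`, `⟨Z,G⟩ ≥ -ε/6` and `‖G+Z-F‖² ≤ σ² - ε`,
then `⟨F,Z⟩ ≥ ε/4`. -/
theorem fitting_below_noise_forces_correlation
    (n : ℕ) (σ ε : ℝ) (hσ : 0 ≤ σ) (hε : ε ∈ Set.Ioo (0 : ℝ) 1)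
    (Z G F : EuclideanSpace ℝ (Fin n))
    (hZ : σ ^ 2 - ε / 6 ≤ ‖Z‖ ^ 2)
    (hZG : -(ε / 6) ≤ inner ℝ Z G)
    (hfit : ‖G + Z - F‖ ^ 2 ≤ σ ^ 2 - ε) :
    ε / 4 ≤ (inner ℝ F Z : ℝ) := by
  have hre : G + Z - F = (G - F) + Z := by abel
  have hexp : ‖(G - F) + Z‖ ^ 2
      = ‖G - F‖ ^ 2 + 2 * inner ℝ (G - F) Z + ‖Z‖ ^ 2 := by
    rw [norm_add_sq_real]
  rw [hre, hexp] at hfit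
  have hsub : (inner ℝ (G - F) Z : ℝ) = inner ℝ G Z - inner ℝ F Z := inner_sub_left _ _ _
  have hcomm : (inner ℝ G Z : ℝ) = inner ℝ Z G := real_inner_comm _ _
  have hnn : (0 : ℝ) ≤ ‖G - F‖ ^ 2 := sq_nonneg _
  nlinarith [hfit, hZ, hZG, hnn]
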